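/- Let f ∈ L²([0,1]^k) be a symmetric function, and let H_f ⊆ L²([0,1]) be the closed subspace spanned by the functions t ↦ ∫_A f(t_1,...,t_{k-1}, t) dt_1⋯dt_{k-1} as A ranges over Borel subsets of [0,1]^{k-1}. Then f belongs to the closed subspace H_f^{⊗k} of L²([0,1]^k) (and by symmetry to its symmetric part). -/

import Mathlib

open MeasureTheory
open scoped RealInnerProductSpace ENNReal

/-- Lebesgue measure on `[0,1]`. -/
noncomputable def unifI : Measure ℝ := volume.restrict (Set.Icc 0 1)

/-- Lebesgue measure on the cube `[0,1]^k` (as `Fin k → ℝ`). -/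
noncomputable def unifCube (k : ℕ) : Measure (Fin k → ℝ) := Measure.pi fun _ => unifI

/-- The closed subspace `H_f` of `L²([0,1])` spanned by the marginal functions
`t ↦ ∫_A f(t₁,…,t_{k-1}, t) dt₁⋯dt_{k-1}`, `A` Borel, for `f ∈ L²([0,1]^k)`. -/
noncomputable def marginalSpace (m : ℕ) (f : Lp ℝ 2 (unifCube (m + 1))) :
    Submodule ℝ (Lp ℝ 2 unifI) :=
  (Submodule.span ℝ {g : Lp ℝ 2 unifI | ∃ A : Set (Fin m → ℝ), MeasurableSet A ∧
    (g : ℝ → ℝ) =ᵐ[unifI] fun t => ∫ y in A, f (Fin.snoc y t) ∂(unifCube m)}).topologicalClosure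

instance : IsProbabilityMeasure unifI := ⟨by simp [unifI, Real.volume_Icc]⟩
instance (k : ℕ) : IsProbabilityMeasure (unifCube k) := by unfold unifCube; infer_instance

section MS
noncomputable abbrev unifIMS : MeasureSpace ℝ := ⟨unifI⟩
attribute [local instance 2000] unifIMS
local instance : IsProbabilityMeasure (volume : Measure ℝ) := inferInstanceAs (IsProbabilityMeasure unifI)

theorem memℒp_tprod (n : ℕ) (e : Fin n → Lp ℝ 2 unifI) :
    MemLp (fun x : Fin n → ℝ => ∏ i, e i (x i)) 2 (unifCube n) := by
  have hae : ∀ i : Fin n, AEStronglyMeasurable (fun x : Fin n → ℝ => e i (x i)) (unifCube n) := by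
    intro i
    refine ⟨fun x => (Lp.aestronglyMeasurable (e i)).mk _ (x i),
      ((Lp.aestronglyMeasurable (e i)).stronglyMeasurable_mk).comp_measurable
        (measurable_pi_apply i), ?_⟩
    exact (Lp.aestronglyMeasurable (e i)).ae_eq_mk.comp_tendsto
      (MeasureTheory.Measure.tendsto_eval_ae_ae (μ := fun _ : Fin n => unifI) (i := i))
  have hsm : AEStronglyMeasurable (fun x : Fin n → ℝ => ∏ i, e i (x i)) (unifCube n) :=
    Finset.aestronglyMeasurable_fun_prod _ (fun i _ => hae i)
  rw [memLp_two_iff_integrable_sq hsm]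
  exact (MeasureTheory.Integrable.fin_nat_prod (f := fun i t => (e i t)^2)
      (fun i => (Lp.memLp (e i)).integrable_sq)).congr
    (Filter.Eventually.of_forall fun x => by simp [Finset.prod_pow])

noncomputable def tprodLp {n : ℕ} (e : Fin n → Lp ℝ 2 unifI) : Lp ℝ 2 (unifCube n) :=
  (memℒp_tprod n e).toLp _

theorem coeFn_tprodLp {n : ℕ} (e : Fin n → Lp ℝ 2 unifI) :
    tprodLp e =ᵐ[unifCube n] fun x => ∏ i, e i (x i) :=
  (memℒp_tprod n e).coeFn_toLp

theorem inner_tprodLp {n : ℕ} (a b : Fin n → Lp ℝ 2 unifI) :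
    ⟪tprodLp a, tprodLp b⟫ = ∏ i, ⟪a i, b i⟫ := by
  rw [MeasureTheory.L2.inner_def]
  have h1 : (fun x => ⟪tprodLp a x, tprodLp b x⟫) =ᵐ[unifCube n]
      fun x : Fin n → ℝ => ∏ i, (a i (x i) * b i (x i)) := by
    filter_upwards [coeFn_tprodLp a, coeFn_tprodLp b] with x hx hy
    simp [hx, hy, RCLike.inner_apply, Finset.prod_mul_distrib, mul_comm]
  rw [integral_congr_ae h1]
  have := MeasureTheory.integral_fin_nat_prod_eq_prod (E := fun _ : Fin n => ℝ) (μ := fun _ => unifI)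
    (f := fun i t => a i t * b i t)
  rw [show ∫ x : Fin n → ℝ, ∏ i, (a i (x i) * b i (x i)) ∂(unifCube n)
      = ∫ x : Fin n → ℝ, ∏ i, (a i (x i) * b i (x i)) ∂(Measure.pi fun _ => unifI) from rfl, this]
  refine Finset.prod_congr rfl fun i _ => ?_
  rw [MeasureTheory.L2.inner_def]
  exact integral_congr_ae (Filter.Eventually.of_forall fun t => by simp [RCLike.inner_apply, mul_comm])
end MS


theorem L2real_inner {α : Type*} [MeasurableSpace α] {μ : Measure α} (g₁ g₂ : Lp ℝ 2 μ) :
    ⟪g₁, g₂⟫ = ∫ x, g₁ x * g₂ x ∂μ := by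
  rw [MeasureTheory.L2.inner_def]
  exact integral_congr_ae (Filter.Eventually.of_forall fun t => by simp [RCLike.inner_apply, mul_comm])

variable {m : ℕ}

noncomputable def lastEquiv (m : ℕ) : (Fin (m + 1) → ℝ) ≃ᵐ ℝ × (Fin m → ℝ) :=
  MeasurableEquiv.piFinSuccAbove (fun _ => ℝ) (Fin.last m)

theorem lastEquiv_mp :
    MeasurePreserving (lastEquiv m) (unifCube (m + 1)) (unifI.prod (unifCube m)) :=
  MeasureTheory.measurePreserving_piFinSuccAbove (fun _ => unifI) (Fin.last m)

theorem lastEquiv_symm_apply (z : ℝ × (Fin m → ℝ)) :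
    (lastEquiv m).symm z = Fin.snoc z.2 z.1 := by
  show (Fin.insertNthEquiv (fun _ => ℝ) (Fin.last m)) z = _
  simp [Fin.insertNthEquiv, Fin.insertNth_last']

theorem memℒp_fSnoc (f : Lp ℝ 2 (unifCube (m + 1))) :
    MemLp (fun z : ℝ × (Fin m → ℝ) => f (Fin.snoc z.2 z.1)) 2 (unifI.prod (unifCube m)) := by
  have h := (Lp.memLp f).comp_measurePreserving (lastEquiv_mp.symm (lastEquiv m))
  have he : (⇑f ∘ ⇑(lastEquiv m).symm) = fun z : ℝ × (Fin m → ℝ) => f (Fin.snoc z.2 z.1) :=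
    funext fun z => by rw [Function.comp_apply, lastEquiv_symm_apply]
  rwa [he] at h

noncomputable def fSnocLp (f : Lp ℝ 2 (unifCube (m + 1))) : Lp ℝ 2 (unifI.prod (unifCube m)) :=
  (memℒp_fSnoc f).toLp _

theorem coeFn_fSnocLp (f : Lp ℝ 2 (unifCube (m + 1))) :
    fSnocLp f =ᵐ[unifI.prod (unifCube m)] fun z => f (Fin.snoc z.2 z.1) :=
  (memℒp_fSnoc f).coeFn_toLp

theorem memℒp_mix (h : Lp ℝ 2 (unifCube m)) (b : Lp ℝ 2 unifI) :
    MemLp (fun z : ℝ × (Fin m → ℝ) => h z.2 * b z.1) 2 (unifI.prod (unifCube m)) := by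
  have hh : AEStronglyMeasurable (fun z : ℝ × (Fin m → ℝ) => h z.2) (unifI.prod (unifCube m)) :=
    (Lp.aestronglyMeasurable h).comp_quasiMeasurePreserving Measure.quasiMeasurePreserving_snd
  have hb : AEStronglyMeasurable (fun z : ℝ × (Fin m → ℝ) => b z.1) (unifI.prod (unifCube m)) :=
    (Lp.aestronglyMeasurable b).comp_quasiMeasurePreserving Measure.quasiMeasurePreserving_fst
  have hmul : AEStronglyMeasurable (fun z : ℝ × (Fin m → ℝ) => h z.2 * b z.1)
      (unifI.prod (unifCube m)) := hh.mul hb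
  rw [memLp_two_iff_integrable_sq hmul]
  have : Integrable (fun z : ℝ × (Fin m → ℝ) => ((b z.1) ^ 2) * ((h z.2) ^ 2))
      (unifI.prod (unifCube m)) :=
    Integrable.mul_prod ((Lp.memLp b).integrable_sq) ((Lp.memLp h).integrable_sq)
  exact this.congr (Filter.Eventually.of_forall fun z => by ring)

noncomputable def mixLp (h : Lp ℝ 2 (unifCube m)) (b : Lp ℝ 2 unifI) :
    Lp ℝ 2 (unifI.prod (unifCube m)) := (memℒp_mix h b).toLp _

theorem coeFn_mixLp (h : Lp ℝ 2 (unifCube m)) (b : Lp ℝ 2 unifI) :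
    mixLp h b =ᵐ[unifI.prod (unifCube m)] fun z => h z.2 * b z.1 :=
  (memℒp_mix h b).coeFn_toLp

theorem mixLp_add (h₁ h₂ : Lp ℝ 2 (unifCube m)) (b : Lp ℝ 2 unifI) :
    mixLp (h₁ + h₂) b = mixLp h₁ b + mixLp h₂ b := by
  refine Lp.ext ?_
  have hc := (Lp.coeFn_add h₁ h₂).comp_tendsto
    (Measure.quasiMeasurePreserving_snd (μ := unifI) (ν := unifCube m)).tendsto_ae
  filter_upwards [coeFn_mixLp (h₁ + h₂) b, coeFn_mixLp h₁ b, coeFn_mixLp h₂ b,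
    Lp.coeFn_add (mixLp h₁ b) (mixLp h₂ b), hc] with z e1 e2 e3 e4 e5
  rw [e1, e4]
  simp only [Function.comp_apply, Pi.add_apply] at e5 ⊢
  rw [e5, e2, e3]; ring

theorem mixLp_sub (h₁ h₂ : Lp ℝ 2 (unifCube m)) (b : Lp ℝ 2 unifI) :
    mixLp (h₁ - h₂) b = mixLp h₁ b - mixLp h₂ b := by
  refine Lp.ext ?_
  have hc := (Lp.coeFn_sub h₁ h₂).comp_tendsto
    (Measure.quasiMeasurePreserving_snd (μ := unifI) (ν := unifCube m)).tendsto_ae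
  filter_upwards [coeFn_mixLp (h₁ - h₂) b, coeFn_mixLp h₁ b, coeFn_mixLp h₂ b,
    Lp.coeFn_sub (mixLp h₁ b) (mixLp h₂ b), hc] with z e1 e2 e3 e4 e5
  rw [e1, e4]
  simp only [Function.comp_apply, Pi.sub_apply] at e5 ⊢
  rw [e5, e2, e3]; ring

theorem norm_mixLp (h : Lp ℝ 2 (unifCube m)) (b : Lp ℝ 2 unifI) :
    ‖mixLp h b‖ = ‖h‖ * ‖b‖ := by
  have key : ⟪mixLp h b, mixLp h b⟫ = (‖h‖ * ‖b‖) * (‖h‖ * ‖b‖) := by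
    rw [L2real_inner]
    have h1 : ∫ z, (mixLp h b) z * (mixLp h b) z ∂(unifI.prod (unifCube m))
        = ∫ z : ℝ × (Fin m → ℝ), (b z.1 * b z.1) * (h z.2 * h z.2) ∂(unifI.prod (unifCube m)) := by
      refine integral_congr_ae ?_
      filter_upwards [coeFn_mixLp h b] with z e1
      rw [e1]; ring
    have h2 : ∫ z : ℝ × (Fin m → ℝ), (b z.1 * b z.1) * (h z.2 * h z.2)
        ∂(unifI.prod (unifCube m))
        = (∫ t, b t * b t ∂unifI) * ∫ y, h y * h y ∂(unifCube m) :=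
      integral_prod_mul (f := fun t => (b : ℝ → ℝ) t * b t)
        (g := fun y => (h : (Fin m → ℝ) → ℝ) y * h y)
    rw [h1, h2]
    have hb2 : ∫ t, b t * b t ∂unifI = ‖b‖ * ‖b‖ := by
      rw [← L2real_inner, real_inner_self_eq_norm_mul_norm]
    have hh2 : ∫ y, h y * h y ∂(unifCube m) = ‖h‖ * ‖h‖ := by
      rw [← L2real_inner, real_inner_self_eq_norm_mul_norm]
    rw [hb2, hh2]; ring
  have h2 : ⟪mixLp h b, mixLp h b⟫ = ‖mixLp h b‖ * ‖mixLp h b‖ :=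
    real_inner_self_eq_norm_mul_norm _
  rw [h2] at key
  exact (mul_self_inj (norm_nonneg _) (mul_nonneg (norm_nonneg _) (norm_nonneg _))).1 key

noncomputable def Phi (f : Lp ℝ 2 (unifCube (m + 1))) (b : Lp ℝ 2 unifI)
    (h : Lp ℝ 2 (unifCube m)) : ℝ := ⟪fSnocLp f, mixLp h b⟫

theorem Phi_eq_integral (f : Lp ℝ 2 (unifCube (m + 1))) (b : Lp ℝ 2 unifI)
    (h : Lp ℝ 2 (unifCube m)) :
    Phi f b h = ∫ z : ℝ × (Fin m → ℝ), f (Fin.snoc z.2 z.1) * (h z.2 * b z.1)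
      ∂(unifI.prod (unifCube m)) := by
  rw [Phi, L2real_inner]
  refine integral_congr_ae ?_
  filter_upwards [coeFn_fSnocLp f, coeFn_mixLp h b] with z e1 e2
  rw [e1, e2]

theorem integrable_Phi_integrand (f : Lp ℝ 2 (unifCube (m + 1))) (b : Lp ℝ 2 unifI)
    (h : Lp ℝ 2 (unifCube m)) :
    Integrable (fun z : ℝ × (Fin m → ℝ) => f (Fin.snoc z.2 z.1) * (h z.2 * b z.1))
      (unifI.prod (unifCube m)) := by
  have := MeasureTheory.L2.integrable_inner (𝕜 := ℝ) (fSnocLp f) (mixLp h b)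
  refine this.congr ?_
  filter_upwards [coeFn_fSnocLp f, coeFn_mixLp h b] with z e1 e2
  simp [e1, e2, RCLike.inner_apply, mul_comm]

theorem marg_memℒp (f : Lp ℝ 2 (unifCube (m + 1))) {s : Set (Fin m → ℝ)}
    (hs : MeasurableSet s) :
    MemLp (fun t => ∫ y in s, f (Fin.snoc y t) ∂(unifCube m)) 2 unifI := by
  set F : ℝ × (Fin m → ℝ) → ℝ := fun z => f (Fin.snoc z.2 z.1) with hF
  have hFmem : MemLp F 2 (unifI.prod (unifCube m)) := memℒp_fSnoc f
  have hFaesm : AEStronglyMeasurable F (unifI.prod (unifCube m)) := hFmem.aestronglyMeasurable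
  have hFsqInt : Integrable (fun z => F z * F z) (unifI.prod (unifCube m)) :=
    hFmem.integrable_sq.congr (Filter.Eventually.of_forall fun z => by ring)
  -- a.e. strong measurability of the marginal
  have hind : AEStronglyMeasurable (fun z : ℝ × (Fin m → ℝ) =>
      F z * s.indicator (fun _ => (1:ℝ)) z.2) (unifI.prod (unifCube m)) :=
    hFaesm.mul (((measurable_const.indicator hs).comp measurable_snd).aestronglyMeasurable)
  have hmarg_eq : (fun t => ∫ y in s, f (Fin.snoc y t) ∂(unifCube m))
      = fun t => ∫ y, F (t, y) * s.indicator (fun _ => (1:ℝ)) y ∂(unifCube m) := by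
    funext t
    rw [← integral_indicator hs]
    congr 1
    funext y
    by_cases hy : y ∈ s <;> simp [hy, hF]
  have haesm : AEStronglyMeasurable (fun t => ∫ y in s, f (Fin.snoc y t) ∂(unifCube m)) unifI := by
    rw [hmarg_eq]
    exact hind.integral_prod_right'
  -- the dominating function
  set g : ℝ → ℝ := fun t => Real.sqrt (∫ y, F (t, y) * F (t, y) ∂(unifCube m)) with hg
  have hg2_int : Integrable (fun t => ∫ y, F (t, y) * F (t, y) ∂(unifCube m)) unifI :=
    hFsqInt.integral_prod_left
  have hg_sq : ∀ t, g t * g t = ∫ y, F (t, y) * F (t, y) ∂(unifCube m) := fun t =>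
    Real.mul_self_sqrt (integral_nonneg fun y => mul_self_nonneg _)
  have hg_aesm : AEStronglyMeasurable g unifI :=
    Real.continuous_sqrt.comp_aestronglyMeasurable
      ((hFaesm.mul hFaesm).integral_prod_right')
  have hg_mem : MemLp g 2 unifI := by
    rw [memLp_two_iff_integrable_sq hg_aesm]
    refine hg2_int.congr (Filter.Eventually.of_forall fun t => ?_)
    show (∫ y, F (t, y) * F (t, y) ∂(unifCube m)) = g t ^ 2
    rw [← hg_sq t]; ring
  refine MemLp.of_le hg_mem haesm ?_
  filter_upwards [hFsqInt.prod_right_ae, hFaesm.prodMk_left] with t hint haesm_t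
  have hmem_t : MemLp (fun y => F (t, y)) 2 (unifCube m) := by
    rw [memLp_two_iff_integrable_sq haesm_t]
    exact hint.congr (Filter.Eventually.of_forall fun y => by ring)
  set U : Lp ℝ 2 (unifCube m) := hmem_t.toLp _ with hU
  set Ind : Lp ℝ 2 (unifCube m) := indicatorConstLp 2 hs (measure_ne_top _ _) (1:ℝ) with hInd
  have hIU : ⟪Ind, U⟫ = ∫ y in s, f (Fin.snoc y t) ∂(unifCube m) := by
    rw [L2real_inner]
    have e1 : ∫ y, Ind y * U y ∂(unifCube m)
        = ∫ y, s.indicator (fun y => F (t, y)) y ∂(unifCube m) := by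
      refine integral_congr_ae ?_
      filter_upwards [indicatorConstLp_coeFn (p := 2) (μ := unifCube m)
        (hs := hs) (hμs := measure_ne_top _ _) (c := (1:ℝ)), hmem_t.coeFn_toLp] with y e2 e3
      rw [hInd]
      rw [e2]
      rw [hU, e3]
      by_cases hy : y ∈ s <;> simp [hy]
    rw [e1, integral_indicator hs]
  have hnormInd : ‖Ind‖ ≤ 1 := by
    rw [hInd, norm_indicatorConstLp two_ne_zero ENNReal.ofNat_ne_top]
    simp only [norm_one, one_mul]
    refine Real.rpow_le_one ENNReal.toReal_nonneg ?_ (by positivity)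
    have h6 := ENNReal.toReal_mono ENNReal.one_ne_top (prob_le_one (μ := unifCube m) (s := s))
    simpa using h6
  have hnormU : ‖U‖ = g t := by
    have h5 : ⟪U, U⟫ = ∫ y, F (t, y) * F (t, y) ∂(unifCube m) := by
      rw [L2real_inner]
      refine integral_congr_ae ?_
      filter_upwards [hmem_t.coeFn_toLp] with y e3
      rw [hU, e3]
    show ‖U‖ = Real.sqrt (∫ y, F (t, y) * F (t, y) ∂(unifCube m))
    rw [← h5, real_inner_self_eq_norm_mul_norm _, Real.sqrt_mul_self (norm_nonneg _)]
  calc ‖∫ y in s, f (Fin.snoc y t) ∂(unifCube m)‖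
      = |⟪Ind, U⟫| := by rw [hIU, Real.norm_eq_abs]
    _ ≤ ‖Ind‖ * ‖U‖ := abs_real_inner_le_norm _ _
    _ ≤ 1 * ‖U‖ := mul_le_mul_of_nonneg_right hnormInd (norm_nonneg U)
    _ = g t := by rw [one_mul, hnormU]
    _ ≤ ‖g t‖ := le_abs_self _

theorem margLp_mem (f : Lp ℝ 2 (unifCube (m + 1))) {s : Set (Fin m → ℝ)}
    (hs : MeasurableSet s) : (marg_memℒp f hs).toLp _ ∈ marginalSpace m f :=
  Submodule.le_topologicalClosure _
    (Submodule.subset_span ⟨s, hs, (marg_memℒp f hs).coeFn_toLp⟩)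

theorem Phi_indicatorConst (f : Lp ℝ 2 (unifCube (m + 1))) (b : Lp ℝ 2 unifI) (c : ℝ)
    {s : Set (Fin m → ℝ)} (hs : MeasurableSet s) (hμs : unifCube m s ≠ ∞) :
    Phi f b (indicatorConstLp 2 hs hμs c)
      = c * ⟪(marg_memℒp f hs).toLp _, b⟫ := by
  set h : Lp ℝ 2 (unifCube m) := indicatorConstLp 2 hs hμs c with hh
  rw [Phi_eq_integral, integral_prod _ (integrable_Phi_integrand f b h)]
  have hinner : ∀ t : ℝ, (∫ y, f (Fin.snoc y t) * (h y * b t) ∂(unifCube m))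
      = (∫ y in s, f (Fin.snoc y t) ∂(unifCube m)) * (c * b t) := by
    intro t
    have e1 : (fun y => f (Fin.snoc y t) * (h y * b t)) =ᵐ[unifCube m]
        fun y => s.indicator (fun y => f (Fin.snoc y t) * (c * b t)) y := by
      filter_upwards [indicatorConstLp_coeFn (p := 2) (μ := unifCube m)
        (hs := hs) (hμs := hμs) (c := c)] with y e2
      rw [hh, e2]
      by_cases hy : y ∈ s <;> simp [hy] <;> ring
    rw [integral_congr_ae e1, integral_indicator hs, integral_mul_const]
  have e3 : (fun t => ∫ y, f (Fin.snoc (t, y).2 (t, y).1) * (h (t, y).2 * b (t, y).1)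
      ∂(unifCube m)) = fun t => (∫ y in s, f (Fin.snoc y t) ∂(unifCube m)) * (c * b t) :=
    funext fun t => hinner t
  rw [e3]
  have e4 : (fun t => (∫ y in s, f (Fin.snoc y t) ∂(unifCube m)) * (c * b t))
      = fun t => c * ((∫ y in s, f (Fin.snoc y t) ∂(unifCube m)) * b t) :=
    funext fun t => by ring
  rw [e4, MeasureTheory.integral_const_mul]
  congr 1
  rw [L2real_inner]
  refine (integral_congr_ae ?_).symm
  filter_upwards [(marg_memℒp f hs).coeFn_toLp] with t e5
  rw [e5]

theorem Phi_add (f : Lp ℝ 2 (unifCube (m + 1))) (b : Lp ℝ 2 unifI)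
    (h₁ h₂ : Lp ℝ 2 (unifCube m)) : Phi f b (h₁ + h₂) = Phi f b h₁ + Phi f b h₂ := by
  rw [Phi, Phi, Phi, mixLp_add, inner_add_right]

theorem Phi_continuous (f : Lp ℝ 2 (unifCube (m + 1))) (b : Lp ℝ 2 unifI) :
    Continuous (Phi f b) := by
  have hlip : LipschitzWith (‖fSnocLp f‖₊ * ‖b‖₊) (Phi f b) := by
    refine LipschitzWith.of_dist_le_mul fun h₁ h₂ => ?_
    have e1 : Phi f b h₁ - Phi f b h₂ = ⟪fSnocLp f, mixLp (h₁ - h₂) b⟫ := by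
      rw [Phi, Phi, mixLp_sub, inner_sub_right]
    rw [Real.dist_eq, e1]
    calc |⟪fSnocLp f, mixLp (h₁ - h₂) b⟫| ≤ ‖fSnocLp f‖ * ‖mixLp (h₁ - h₂) b‖ :=
          abs_real_inner_le_norm _ _
      _ = ‖fSnocLp f‖ * (‖h₁ - h₂‖ * ‖b‖) := by rw [norm_mixLp]
      _ = ↑(‖fSnocLp f‖₊ * ‖b‖₊) * dist h₁ h₂ := by
          rw [dist_eq_norm]; push_cast; ring
  exact hlip.continuous

theorem Phi_eq_zero (f : Lp ℝ 2 (unifCube (m + 1))) (b : Lp ℝ 2 unifI)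
    (hb : b ∈ (marginalSpace m f)ᗮ) (h : Lp ℝ 2 (unifCube m)) : Phi f b h = 0 := by
  haveI : Fact ((1 : ℝ≥0∞) ≤ 2) := ⟨one_le_two⟩
  refine Lp.induction (E := ℝ) (μ := unifCube m) (p := (2 : ℝ≥0∞)) ENNReal.ofNat_ne_top
    (fun h => Phi f b h = 0) ?_ ?_ ?_ h
  · intro c s hss hμs
    rw [Lp.simpleFunc.coe_indicatorConst, Phi_indicatorConst f b c hss hμs.ne]
    rw [(Submodule.mem_orthogonal _ b).1 hb _ (margLp_mem f hss), mul_zero]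
  · intro g₁ g₂ hg₁ hg₂ _ hP1 hP2
    rw [Phi_add, hP1, hP2, add_zero]
  · exact isClosed_eq (Phi_continuous f b) continuous_const

theorem inner_f_tprod_comp (m : ℕ) (f : Lp ℝ 2 (unifCube (m + 1)))
    (hsym : ∀ σ : Equiv.Perm (Fin (m + 1)),
      (fun x : Fin (m + 1) → ℝ => f (x ∘ σ)) =ᵐ[unifCube (m + 1)] f)
    (σ : Equiv.Perm (Fin (m + 1))) (e : Fin (m + 1) → Lp ℝ 2 unifI) :
    ⟪f, tprodLp e⟫ = ⟪f, tprodLp (fun i => e (σ i))⟫ := by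
  set E := MeasurableEquiv.piCongrLeft (fun _ : Fin (m + 1) => ℝ) σ with hEdef
  have hMP : MeasurePreserving E (unifCube (m + 1)) (unifCube (m + 1)) :=
    MeasureTheory.measurePreserving_piCongrLeft (fun _ : Fin (m + 1) => unifI) σ
  have hE : ∀ (x : Fin (m + 1) → ℝ) (i : Fin (m + 1)), E x i = x (σ.symm i) := by
    intro x i
    conv_lhs => rw [show i = σ (σ.symm i) by simp]
    exact MeasurableEquiv.piCongrLeft_apply_apply (β := fun _ : Fin (m + 1) => ℝ) σ x (σ.symm i)
  have key : ∀ g₁ g₂ : Lp ℝ 2 (unifCube (m + 1)), ⟪g₁, g₂⟫ =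
      ∫ x, g₁ x * g₂ x ∂(unifCube (m + 1)) := by
    intro g₁ g₂
    rw [MeasureTheory.L2.inner_def]
    exact integral_congr_ae (Filter.Eventually.of_forall fun t => by simp [RCLike.inner_apply, mul_comm])
  rw [key, key]
  have step1 : ∫ x, f x * tprodLp e x ∂(unifCube (m + 1))
      = ∫ x, f (E x) * tprodLp e (E x) ∂(unifCube (m + 1)) :=
    (hMP.integral_comp E.measurableEmbedding _).symm
  rw [step1]
  have step2 : (fun x => f (E x) * tprodLp e (E x)) =ᵐ[unifCube (m + 1)]
      fun x => f x * ∏ i, e (σ i) (x i) := by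
    have h1 : (fun x : Fin (m + 1) → ℝ => tprodLp e (E x)) =ᵐ[unifCube (m + 1)]
        fun x => ∏ i, e (σ i) (x i) := by
      have := (coeFn_tprodLp e).comp_tendsto hMP.quasiMeasurePreserving.tendsto_ae
      refine this.trans (Filter.Eventually.of_forall fun x => ?_)
      simp only [Function.comp_apply, hE]
      exact Fintype.prod_equiv σ.symm _ _ fun i => by simp
    have h2 : (fun x : Fin (m + 1) → ℝ => f (E x)) =ᵐ[unifCube (m + 1)] f := by
      have h3 : (fun x : Fin (m + 1) → ℝ => f (E x))
          = fun x => f (x ∘ σ.symm) := by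
        funext x; congr 1; funext i; exact hE x i
      rw [h3]; exact hsym σ.symm
    exact h2.mul h1
  rw [integral_congr_ae step2]
  exact integral_congr_ae ((Filter.EventuallyEq.refl _ _).mul (coeFn_tprodLp _).symm)

theorem inner_f_tprodLp_eq_Phi (f : Lp ℝ 2 (unifCube (m + 1))) (e : Fin (m + 1) → Lp ℝ 2 unifI) :
    ⟪f, tprodLp e⟫ = Phi f (e (Fin.last m)) (tprodLp fun i : Fin m => e i.castSucc) := by
  rw [L2real_inner, Phi_eq_integral]
  have hmp : MeasurePreserving (lastEquiv m).symm (unifI.prod (unifCube m)) (unifCube (m + 1)) :=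
    lastEquiv_mp.symm (lastEquiv m)
  have hcomp := hmp.integral_comp (lastEquiv m).symm.measurableEmbedding
    (fun x => f x * tprodLp e x)
  rw [← hcomp]
  refine integral_congr_ae ?_
  have h1 := (coeFn_tprodLp e).comp_tendsto hmp.quasiMeasurePreserving.tendsto_ae
  have h2 := (coeFn_tprodLp (fun i : Fin m => e i.castSucc)).comp_tendsto
    (Measure.quasiMeasurePreserving_snd (μ := unifI) (ν := unifCube m)).tendsto_ae
  filter_upwards [h1, h2] with z hz1 hz2
  simp only [Function.comp_apply] at hz1 hz2
  rw [hz1, hz2, lastEquiv_symm_apply]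
  congr 1
  rw [Fin.prod_univ_castSucc]
  simp [Fin.snoc_castSucc, Fin.snoc_last]

theorem coeFn_lpsum {α E : Type*} [MeasurableSpace α] {μ : Measure α} [NormedAddCommGroup E]
    {p : ℝ≥0∞} {ι : Type*} (s : Finset ι) (g : ι → Lp E p μ) :
    ⇑(∑ i ∈ s, g i) =ᵐ[μ] fun x => ∑ i ∈ s, g i x := by
  classical
  induction s using Finset.induction_on with
  | empty =>
    simp only [Finset.sum_empty]
    exact Lp.coeFn_zero _ _ _
  | insert a s' hns ih =>
    rw [Finset.sum_insert hns]
    filter_upwards [Lp.coeFn_add (g a) (∑ i ∈ s', g i), ih] with x h1 h2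
    rw [h1]
    simp only [Pi.add_apply, h2, Finset.sum_insert hns]

theorem indicatorConstLp_eq_smul {n : ℕ} {A : Set (Fin n → ℝ)} (hA : MeasurableSet A)
    (hμA : unifCube n A ≠ ∞) (c : ℝ) :
    indicatorConstLp 2 hA hμA c = c • indicatorConstLp 2 hA hμA (1 : ℝ) := by
  refine Lp.ext ?_
  filter_upwards [indicatorConstLp_coeFn (p := 2) (hs := hA) (hμs := hμA) (c := c),
    indicatorConstLp_coeFn (p := 2) (hs := hA) (hμs := hμA) (c := (1:ℝ)),
    Lp.coeFn_smul c (indicatorConstLp 2 hA hμA (1 : ℝ))] with x h1 h2 h3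
  rw [h1, h3]
  simp only [Pi.smul_apply, h2]
  by_cases hx : x ∈ A <;> simp [hx]

theorem box_indicator_eq_tprod {n : ℕ} (ts : Fin n → Set ℝ) (hts : ∀ i, MeasurableSet (ts i))
    (hA : MeasurableSet (Set.pi Set.univ ts)) :
    indicatorConstLp 2 hA (measure_ne_top _ _) (1 : ℝ)
      = tprodLp (fun i => indicatorConstLp 2 (hts i) (measure_ne_top _ _) (1 : ℝ)) := by
  refine Lp.ext ?_
  set e := fun i => indicatorConstLp (μ := unifI) 2 (hts i) (measure_ne_top _ _) (1 : ℝ)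
  have hall : ∀ᵐ x ∂(unifCube n), ∀ i, (e i) (x i) = Set.indicator (ts i) (fun _ => (1:ℝ)) (x i) := by
    rw [MeasureTheory.ae_all_iff]
    intro i
    exact (indicatorConstLp_coeFn (p := 2) (hs := hts i)
      (hμs := measure_ne_top _ _) (c := (1:ℝ))).comp_tendsto
      (MeasureTheory.Measure.tendsto_eval_ae_ae (μ := fun _ : Fin n => unifI) (i := i))
  filter_upwards [indicatorConstLp_coeFn (p := 2) (hs := hA)
    (hμs := measure_ne_top _ _) (c := (1:ℝ)), coeFn_tprodLp e, hall] with x h1 h2 h3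
  rw [h1, h2]
  simp only [h3]
  by_cases hx : x ∈ Set.pi Set.univ ts
  · rw [Set.indicator_of_mem hx]
    rw [Set.mem_univ_pi] at hx
    exact (Finset.prod_eq_one fun i _ => by rw [Set.indicator_of_mem (hx i)]).symm
  · rw [Set.indicator_of_notMem hx]
    rw [Set.mem_univ_pi] at hx
    push_neg at hx
    obtain ⟨i0, hi0⟩ := hx
    exact (Finset.prod_eq_zero (Finset.mem_univ i0) (by rw [Set.indicator_of_notMem hi0])).symm

theorem dense_tprod (n : ℕ) :
    (Submodule.span ℝ (Set.range (tprodLp (n := n)))).topologicalClosure = ⊤ := by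
  set D := (Submodule.span ℝ (Set.range (tprodLp (n := n)))).topologicalClosure with hD
  have hDclosed : IsClosed (D : Set (Lp ℝ 2 (unifCube n))) :=
    Submodule.isClosed_topologicalClosure _
  have htp : ∀ e : Fin n → Lp ℝ 2 unifI, tprodLp e ∈ D := fun e =>
    Submodule.le_topologicalClosure _ (Submodule.subset_span ⟨e, rfl⟩)
  -- all indicators of measurable sets are in D
  have hC : ∀ A : Set (Fin n → ℝ), MeasurableSet A →
      ∀ hA : MeasurableSet A, indicatorConstLp 2 hA (measure_ne_top _ _) (1:ℝ) ∈ D := by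
    refine MeasurableSpace.induction_on_inter
      (C := fun A _ => ∀ hA : MeasurableSet A,
        indicatorConstLp 2 hA (measure_ne_top (unifCube n) A) (1:ℝ) ∈ D)
      (s := Set.pi Set.univ '' Set.pi Set.univ fun _ : Fin n => {s : Set ℝ | MeasurableSet s})
      generateFrom_pi.symm isPiSystem_pi ?_ ?_ ?_ ?_
    · intro hA
      have : indicatorConstLp 2 hA (measure_ne_top (unifCube n) ∅) (1:ℝ) = 0 := by
        refine Lp.ext ?_
        filter_upwards [indicatorConstLp_coeFn (p := 2) (hs := hA)
          (hμs := measure_ne_top _ _) (c := (1:ℝ)), Lp.coeFn_zero (E := ℝ) (p := 2) (μ := unifCube n)] with x h1 h2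
        rw [h1, h2]; simp
      rw [this]; exact D.zero_mem
    · rintro A ⟨ts, hts, rfl⟩ hA
      rw [box_indicator_eq_tprod ts (fun i => hts i (Set.mem_univ i)) hA]
      exact htp _
    · intro A hAmeas ih hAc
      have hbox : MeasurableSet (Set.pi Set.univ fun _ : Fin n => (Set.univ : Set ℝ)) :=
        MeasurableSet.univ_pi fun _ => MeasurableSet.univ
      have hu : indicatorConstLp 2 hbox (measure_ne_top (unifCube n) _) (1:ℝ) ∈ D := by
        rw [box_indicator_eq_tprod _ (fun _ => MeasurableSet.univ) hbox]
        exact htp _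
      have heq : indicatorConstLp 2 hAc (measure_ne_top (unifCube n) Aᶜ) (1:ℝ)
          = indicatorConstLp 2 hbox (measure_ne_top (unifCube n) _) (1:ℝ)
            - indicatorConstLp 2 hAmeas (measure_ne_top (unifCube n) A) (1:ℝ) := by
        refine Lp.ext ?_
        filter_upwards [indicatorConstLp_coeFn (p := 2) (hs := hAc)
            (hμs := measure_ne_top _ _) (c := (1:ℝ)),
          indicatorConstLp_coeFn (p := 2) (hs := hbox)
            (hμs := measure_ne_top _ _) (c := (1:ℝ)),
          indicatorConstLp_coeFn (p := 2) (hs := hAmeas)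
            (hμs := measure_ne_top _ _) (c := (1:ℝ)),
          Lp.coeFn_sub (indicatorConstLp 2 hbox (measure_ne_top (unifCube n) _) (1:ℝ))
            (indicatorConstLp 2 hAmeas (measure_ne_top (unifCube n) A) (1:ℝ))] with x h1 h2 h3 h4
        rw [h1, h4]
        simp only [Pi.sub_apply, h2, h3]
        by_cases hx : x ∈ A <;> simp [hx, Set.indicator, Set.mem_univ_pi]
      rw [heq]
      exact D.sub_mem hu (ih hAmeas)
    · intro F hdisj hFmeas ihF hU
      set SN : ℕ → Lp ℝ 2 (unifCube n) := fun N =>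
        ∑ k ∈ Finset.range N, indicatorConstLp 2 (hFmeas k) (measure_ne_top _ _) (1:ℝ) with hSNdef
      have hSN : ∀ N, SN N ∈ D := fun N =>
        Submodule.sum_mem _ fun k _ => ihF k (hFmeas k)
      set B : ℕ → Set (Fin n → ℝ) := fun N => ⋃ k, F (k + N) with hBdef
      have hBmeas : ∀ N, MeasurableSet (B N) := fun N => MeasurableSet.iUnion fun k => hFmeas _
      have huniq : ∀ {x k0}, x ∈ F k0 → ∀ j, j ≠ k0 → x ∉ F j := by
        intro x k0 hk0 j hj hxj
        exact Set.disjoint_left.mp (hdisj hj) hxj hk0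
      have hind_all : ∀ᵐ x ∂(unifCube n), ∀ k : ℕ,
          (indicatorConstLp 2 (hFmeas k) (measure_ne_top _ _) (1:ℝ) : Lp ℝ 2 (unifCube n)) x
            = Set.indicator (F k) (fun _ => (1:ℝ)) x :=
        MeasureTheory.ae_all_iff.2 fun k => indicatorConstLp_coeFn (p := 2) (hs := hFmeas k)
          (hμs := measure_ne_top _ _) (c := (1:ℝ))
      have hdiff : ∀ N, (indicatorConstLp 2 hU (measure_ne_top (unifCube n) _) (1:ℝ)
          - SN N : Lp ℝ 2 (unifCube n))
          = indicatorConstLp 2 (hBmeas N) (measure_ne_top (unifCube n) _) (1:ℝ) := by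
        intro N
        refine Lp.ext ?_
        filter_upwards [Lp.coeFn_sub (indicatorConstLp 2 hU (measure_ne_top (unifCube n) _) (1:ℝ))
            (SN N),
          indicatorConstLp_coeFn (p := 2) (hs := hU) (hμs := measure_ne_top _ _) (c := (1:ℝ)),
          indicatorConstLp_coeFn (p := 2) (hs := hBmeas N)
            (hμs := measure_ne_top _ _) (c := (1:ℝ)),
          coeFn_lpsum (Finset.range N)
            (fun k => indicatorConstLp 2 (hFmeas k) (measure_ne_top (unifCube n) _) (1:ℝ)),
          hind_all] with x h1 h2 h3 h4 h5
        rw [h1]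
        simp only [Pi.sub_apply, h2, h3, hSNdef, h4, h5]
        by_cases hx : ∃ k, x ∈ F k
        · obtain ⟨k0, hk0⟩ := hx
          have hxU : x ∈ ⋃ k, F k := Set.mem_iUnion.2 ⟨k0, hk0⟩
          have hsum : ∑ k ∈ Finset.range N, Set.indicator (F k) (fun _ => (1:ℝ)) x
              = if k0 < N then 1 else 0 := by
            by_cases hk0N : k0 < N
            · rw [Finset.sum_eq_single_of_mem k0 (Finset.mem_range.2 hk0N)
                (fun j _ hj => Set.indicator_of_notMem (huniq hk0 j hj) _),
                Set.indicator_of_mem hk0, if_pos hk0N]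
            · rw [if_neg hk0N]
              refine Finset.sum_eq_zero fun j hj => ?_
              have : j ≠ k0 := by
                have := Finset.mem_range.1 hj; omega
              exact Set.indicator_of_notMem (huniq hk0 j this) _
          have hxB : x ∈ B N ↔ ¬ k0 < N := by
            constructor
            · intro hxB
              obtain ⟨j, hj⟩ := Set.mem_iUnion.1 hxB
              have : j + N = k0 := by
                by_contra hne
                exact huniq hk0 (j + N) hne hj
              omega
            · intro hk0N
              refine Set.mem_iUnion.2 ⟨k0 - N, ?_⟩
              have : k0 - N + N = k0 := by omega
              rwa [this]
          rw [Set.indicator_of_mem hxU, hsum]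
          by_cases hk0N : k0 < N
          · rw [if_pos hk0N, Set.indicator_of_notMem (by simp [hxB, hk0N])]
            ring
          · rw [if_neg hk0N, Set.indicator_of_mem (hxB.2 hk0N)]
            ring
        · push_neg at hx
          have hxU : x ∉ ⋃ k, F k := by simpa [Set.mem_iUnion] using hx
          have hxB : x ∉ B N := by simp only [hBdef, Set.mem_iUnion, not_exists]; exact fun j => hx _
          rw [Set.indicator_of_notMem hxU, Set.indicator_of_notMem hxB]
          rw [Finset.sum_eq_zero fun j _ => Set.indicator_of_notMem (hx j) _]
          ring
      have hBanti : Antitone B := by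
        intro N M hNM x hxM
        obtain ⟨k, hk⟩ := Set.mem_iUnion.1 hxM
        refine Set.mem_iUnion.2 ⟨k + M - N, ?_⟩
        have : k + M - N + N = k + M := by omega
        rwa [this]
      have hBempty : ⋂ N, B N = ∅ := by
        ext x
        simp only [Set.mem_iInter, Set.mem_empty_iff_false, iff_false]
        intro hxall
        obtain ⟨k0, hk0⟩ := Set.mem_iUnion.1 (hxall 0)
        obtain ⟨j, hj⟩ := Set.mem_iUnion.1 (hxall (k0 + 0 + 1))
        exact huniq hj (k0 + 0) (by omega) hk0
      have hμB : Filter.Tendsto (fun N => (unifCube n) (B N)) Filter.atTop (nhds 0) := by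
        have h := tendsto_measure_iInter_atTop (μ := unifCube n)
          (fun N => (hBmeas N).nullMeasurableSet) hBanti ⟨0, measure_ne_top _ _⟩
        rw [hBempty] at h
        simpa [Function.comp_def] using h
      have hdist : ∀ N, dist (SN N) (indicatorConstLp 2 hU (measure_ne_top (unifCube n) _) (1:ℝ))
          = ((unifCube n) (B N)).toReal ^ (1 / (2:ℝ≥0∞).toReal) := by
        intro N
        rw [dist_eq_norm, ← norm_neg, neg_sub, hdiff N,
          norm_indicatorConstLp two_ne_zero ENNReal.ofNat_ne_top]
        simp [measureReal_def]
      have htend : Filter.Tendsto SN Filter.atTop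
          (nhds (indicatorConstLp 2 hU (measure_ne_top (unifCube n) _) (1:ℝ))) := by
        rw [tendsto_iff_dist_tendsto_zero]
        have h1 : Filter.Tendsto (fun N => ((unifCube n) (B N)).toReal) Filter.atTop (nhds 0) := by
          have := (ENNReal.tendsto_toReal (by simp : (0:ℝ≥0∞) ≠ ⊤)).comp hμB
          simpa [Function.comp_def] using this
        have h2 := (Real.continuousAt_rpow_const 0 (1 / (2:ℝ≥0∞).toReal)
          (Or.inr (by positivity))).tendsto.comp h1
        simp only [Function.comp_def] at h2
        have h0 : (0:ℝ) ^ (1 / (2:ℝ≥0∞).toReal) = 0 := by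
          rw [Real.zero_rpow]
          simp [ENNReal.toReal_ofNat]
        rw [h0] at h2
        simpa [hdist] using h2
      exact hDclosed.mem_of_tendsto htend (Filter.Eventually.of_forall hSN)
  -- conclude
  rw [eq_top_iff]
  intro x _
  haveI : Fact ((1 : ℝ≥0∞) ≤ 2) := ⟨one_le_two⟩
  refine Lp.induction (E := ℝ) (μ := unifCube n) (p := (2:ℝ≥0∞)) ENNReal.ofNat_ne_top
    (fun x => x ∈ D) ?_ ?_ hDclosed x
  · intro c s hs hμs
    rw [Lp.simpleFunc.coe_indicatorConst, indicatorConstLp_eq_smul hs hμs.ne c]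
    exact D.smul_mem c (hC s hs hs)
  · intro g1 g2 h1 h2 _ p1 p2
    exact D.add_mem p1 p2

theorem inner_f_tprod_zero (f : Lp ℝ 2 (unifCube (m + 1)))
    (hsym : ∀ σ : Equiv.Perm (Fin (m + 1)),
      (fun x : Fin (m + 1) → ℝ => f (x ∘ σ)) =ᵐ[unifCube (m + 1)] f)
    (e : Fin (m + 1) → Lp ℝ 2 unifI) (j : Fin (m + 1))
    (hj : e j ∈ (marginalSpace m f)ᗮ) : ⟪f, tprodLp e⟫ = 0 := by
  rw [inner_f_tprod_comp m f hsym (Equiv.swap (Fin.last m) j) e,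
    inner_f_tprodLp_eq_Phi]
  refine Phi_eq_zero f _ ?_ _
  simpa [Equiv.swap_apply_left] using hj

set_option maxHeartbeats 1000000 in
/-- A symmetric `f ∈ L²([0,1]^k)` belongs to the closed tensor power `H_f^{⊗k}`,
i.e. to the closed span of products `e₁ ⊗ ⋯ ⊗ e_k` with each `e_i ∈ H_f`. -/
theorem symmetric_mem_marginal_tensor_power
    (m : ℕ) (f : Lp ℝ 2 (unifCube (m + 1)))
    (hsym : ∀ σ : Equiv.Perm (Fin (m + 1)),
      (fun x : Fin (m + 1) → ℝ => f (x ∘ σ)) =ᵐ[unifCube (m + 1)] f) :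
    f ∈ (Submodule.span ℝ {g : Lp ℝ 2 (unifCube (m + 1)) |
        ∃ e : Fin (m + 1) → Lp ℝ 2 unifI, (∀ i, e i ∈ marginalSpace m f) ∧
          (g : (Fin (m + 1) → ℝ) → ℝ) =ᵐ[unifCube (m + 1)]
            fun x => ∏ i, e i (x i)}).topologicalClosure := by
  classical
  set M := marginalSpace m f with hM
  set S := (Submodule.span ℝ {g : Lp ℝ 2 (unifCube (m + 1)) |
      ∃ e : Fin (m + 1) → Lp ℝ 2 unifI, (∀ i, e i ∈ marginalSpace m f) ∧
        (g : (Fin (m + 1) → ℝ) → ℝ) =ᵐ[unifCube (m + 1)]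
          fun x => ∏ i, e i (x i)}).topologicalClosure with hS
  haveI hMcomplete : CompleteSpace ↥M :=
    IsComplete.completeSpace_coe (Submodule.isClosed_topologicalClosure _).isComplete
  haveI hScomplete : CompleteSpace ↥S :=
    IsComplete.completeSpace_coe (Submodule.isClosed_topologicalClosure _).isComplete
  have tprod_mem_S : ∀ e : Fin (m + 1) → Lp ℝ 2 unifI, (∀ i, e i ∈ M) → tprodLp e ∈ S :=
    fun e he => Submodule.le_topologicalClosure _
      (Submodule.subset_span ⟨e, he, coeFn_tprodLp e⟩)
  -- if some factor is orthogonal to M, the product is orthogonal to S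
  have S_orth : ∀ (e : Fin (m + 1) → Lp ℝ 2 unifI) (j : Fin (m + 1)), e j ∈ Mᗮ →
      S ≤ (ℝ ∙ (tprodLp e))ᗮ := by
    intro e j hj
    refine Submodule.topologicalClosure_minimal _ ?_ (Submodule.isClosed_orthogonal _)
    rw [Submodule.span_le]
    rintro g ⟨e', he', hg⟩
    have hge : g = tprodLp e' := Lp.ext (hg.trans (coeFn_tprodLp e').symm)
    rw [SetLike.mem_coe, Submodule.mem_orthogonal_singleton_iff_inner_right, hge,
      inner_tprodLp]
    refine Finset.prod_eq_zero (Finset.mem_univ j) ?_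
    rw [real_inner_comm]
    exact (Submodule.mem_orthogonal M (e j)).1 hj (e' j) (he' j)
  set g : Lp ℝ 2 (unifCube (m + 1)) := f - (Submodule.orthogonalProjection S f : Lp ℝ 2 (unifCube (m + 1)))
    with hg
  have hgS : g ∈ Sᗮ := Submodule.sub_starProjection_mem_orthogonal (K := S) f
  -- inner products of g with all products vanish
  have key : ∀ e : Fin (m + 1) → Lp ℝ 2 unifI, ⟪tprodLp e, g⟫ = 0 := by
    intro e
    set u : Fin (m + 1) → Lp ℝ 2 unifI := fun i =>
      (Submodule.orthogonalProjection M (e i) : Lp ℝ 2 unifI) with hu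
    set w : Fin (m + 1) → Lp ℝ 2 unifI := fun i => e i - u i with hw
    have hui : ∀ i, u i ∈ M := fun i => SetLike.coe_mem _
    have hwi : ∀ i, w i ∈ Mᗮ := fun i =>
      Submodule.sub_starProjection_mem_orthogonal (K := M) (e i)
    have hexp : tprodLp e = ∑ T ∈ (Finset.univ : Finset (Fin (m + 1))).powerset,
        tprodLp (fun i => if i ∈ T then u i else w i) := by
      refine Lp.ext ?_
      have hall : ∀ᵐ x ∂(unifCube (m + 1)),
          ∀ T ∈ (Finset.univ : Finset (Fin (m + 1))).powerset,
            (tprodLp (fun i => if i ∈ T then u i else w i)) x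
              = ∏ i, (if i ∈ T then u i else w i) (x i) :=
        (Filter.eventually_all_finset _).2 fun T _ => coeFn_tprodLp _
      have hcoe : ∀ᵐ x ∂(unifCube (m + 1)), ∀ i : Fin (m + 1),
          (e i) (x i) = u i (x i) + w i (x i) := by
        rw [MeasureTheory.ae_all_iff]
        intro i
        have h1 : (fun t => (e i) t) =ᵐ[unifI] fun t => u i t + w i t := by
          filter_upwards [Lp.coeFn_sub (e i) (u i)] with t ht
          rw [hw]
          simp only [ht, Pi.sub_apply]
          ring
        exact h1.comp_tendsto
          (MeasureTheory.Measure.tendsto_eval_ae_ae (μ := fun _ : Fin (m + 1) => unifI) (i := i))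
      filter_upwards [coeFn_tprodLp e, hall, hcoe,
        coeFn_lpsum ((Finset.univ : Finset (Fin (m + 1))).powerset)
          (fun T => tprodLp (fun i => if i ∈ T then u i else w i))] with x h1 h2 h3 h4
      rw [h1, h4]
      have h5 : ∏ i, (e i) (x i) = ∏ i, (u i (x i) + w i (x i)) :=
        Finset.prod_congr rfl fun i _ => h3 i
      rw [h5, Finset.prod_add]
      refine Finset.sum_congr rfl fun T hT => ?_
      rw [h2 T hT]
      have h6 : ∀ i ∈ T, (if i ∈ T then u i else w i) (x i) = u i (x i) :=
        fun i hi => by rw [if_pos hi]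
      have h7 : ∀ i ∈ Finset.univ \ T, (if i ∈ T then u i else w i) (x i) = w i (x i) :=
        fun i hi => by rw [if_neg (Finset.mem_sdiff.1 hi).2]
      rw [← Finset.prod_filter_mul_prod_filter_not Finset.univ (· ∈ T)
        (fun i => (if i ∈ T then u i else w i) (x i))]
      have h8 : Finset.filter (· ∈ T) Finset.univ = T := by
        ext i; simp
      have h9 : Finset.filter (¬ · ∈ T) Finset.univ = Finset.univ \ T := by
        ext i; simp [Finset.mem_sdiff]
      rw [h8, h9, Finset.prod_congr rfl h6, Finset.prod_congr rfl h7]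
    rw [hexp, sum_inner]
    refine Finset.sum_eq_zero fun T _ => ?_
    by_cases hT : T = Finset.univ
    · subst hT
      have : (fun i => if i ∈ (Finset.univ : Finset (Fin (m + 1))) then u i else w i) = u :=
        funext fun i => if_pos (Finset.mem_univ i)
      rw [this]
      exact (Submodule.mem_orthogonal S g).1 hgS _ (tprod_mem_S u hui)
    · obtain ⟨j, hj⟩ : ∃ j, j ∉ T := by
        by_contra h
        push_neg at h
        exact hT (Finset.eq_univ_iff_forall.2 h)
      have hfac : (if j ∈ T then u j else w j) ∈ Mᗮ := by rw [if_neg hj]; exact hwi j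
      rw [hg, inner_sub_right]
      have hz1 : ⟪tprodLp (fun i => if i ∈ T then u i else w i), f⟫ = 0 := by
        rw [real_inner_comm]
        exact inner_f_tprod_zero f hsym _ j hfac
      have hz2 : ⟪tprodLp (fun i => if i ∈ T then u i else w i),
          (Submodule.orthogonalProjection S f : Lp ℝ 2 (unifCube (m + 1)))⟫ = 0 :=
        Submodule.mem_orthogonal_singleton_iff_inner_right.1
          (S_orth _ j hfac (SetLike.coe_mem _))
      rw [hz1, hz2, sub_zero]
  -- density forces g = 0
  have hle : (Submodule.span ℝ (Set.range (tprodLp (n := m + 1)))).topologicalClosure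
      ≤ (ℝ ∙ g)ᗮ := by
    refine Submodule.topologicalClosure_minimal _ ?_ (Submodule.isClosed_orthogonal _)
    rw [Submodule.span_le]
    rintro _ ⟨e, rfl⟩
    rw [SetLike.mem_coe, Submodule.mem_orthogonal_singleton_iff_inner_left]
    exact key e
  rw [dense_tprod (m + 1)] at hle
  have hg0 : g = 0 := by
    have := Submodule.mem_orthogonal_singleton_iff_inner_left.1 (hle (Submodule.mem_top : g ∈ ⊤))
    exact inner_self_eq_zero.1 this
  have hf : f = (Submodule.orthogonalProjection S f : Lp ℝ 2 (unifCube (m + 1))) := by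
    have := sub_eq_zero.1 hg0
    exact this
  rw [hf]
  exact SetLike.coe_mem _
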